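/- Let Ω be a finite state space, μ a probability measure on Ω, F = {f_1,…,f_m} a family of subsets (flaws) of Ω, and for each i and each σ ∈ f_i let ρ_i(σ,·) be a probability distribution on Ω. Define the charge γ_i = max_{τ∈Ω} Σ_{σ∈f_i} (μ(σ)/μ(τ)) ρ_i(σ,τ). Suppose Γ(i) ⊆ [m] is such that for every j ∉ Γ(i)∪{i}, addressing flaw f_i cannot cause f_j (i.e., for every transition σ→τ with ρ_i(σ,τ)>0, if τ ∈ f_j then σ ∈ f_j). Then for every S ⊆ [m]\(Γ(i)∪{i}), μ(f_i | ∩_{j∈S} complement(f_j)) ≤ γ_i. -/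
import Mathlib


/-- Algorithmic charges bound conditional probabilities (Theorem `causality_lopsi`). -/
theorem stmt_0 {Ω : Type*} [Fintype Ω] [DecidableEq Ω] (μ : Ω → ℝ)
    (hμpos : ∀ σ, 0 < μ σ) (hμsum : ∑ σ, μ σ = 1)
    (m : ℕ) (f : Fin m → Finset Ω) (ρ : Fin m → Ω → Ω → ℝ)
    (hρnonneg : ∀ i σ τ, 0 ≤ ρ i σ τ)
    (hρsum : ∀ i, ∀ σ ∈ f i, ∑ τ, ρ i σ τ = 1)
    (i : Fin m) (Γ : Finset (Fin m))
    (hcause : ∀ j, j ∉ Γ → j ≠ i → ∀ σ τ, 0 < ρ i σ τ → τ ∈ f j → σ ∈ f j)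
    (γ : ℝ) (hγ : ∀ τ, ∑ σ ∈ f i, μ σ / μ τ * ρ i σ τ ≤ γ)
    (S : Finset (Fin m)) (hS : ∀ j ∈ S, j ∉ Γ ∧ j ≠ i) :
    (∑ σ ∈ (Finset.univ.filter (fun σ => ∀ j ∈ S, σ ∉ f j)) ∩ f i, μ σ) /
      (∑ σ ∈ Finset.univ.filter (fun σ => ∀ j ∈ S, σ ∉ f j), μ σ) ≤ γ := by
  classical
  set B := Finset.univ.filter (fun σ => ∀ j ∈ S, σ ∉ f j) with hB
  have hne : Nonempty Ω := by
    by_contra h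
    rw [not_nonempty_iff] at h
    simp at hμsum
  have hγ0 : 0 ≤ γ := by
    refine le_trans ?_ (hγ (Classical.arbitrary Ω))
    exact Finset.sum_nonneg fun σ _ =>
      mul_nonneg (div_nonneg (hμpos σ).le (hμpos _).le) (hρnonneg _ _ _)
  by_cases hBe : B = ∅
  · simp [hBe, hγ0]
  · have hbpos : 0 < ∑ σ ∈ B, μ σ :=
      Finset.sum_pos (fun σ _ => hμpos σ) (Finset.nonempty_of_ne_empty hBe)
    rw [div_le_iff₀ hbpos]
    have key : ∀ σ ∈ B ∩ f i, μ σ = ∑ τ ∈ B, μ σ * ρ i σ τ := by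
      intro σ hσ
      rw [Finset.mem_inter] at hσ
      have h1 : ∑ τ, ρ i σ τ = 1 := hρsum i σ hσ.2
      have h2 : ∀ τ ∉ B, ρ i σ τ = 0 := by
        intro τ hτ
        by_contra hρ
        have hρpos : 0 < ρ i σ τ := lt_of_le_of_ne (hρnonneg i σ τ) (Ne.symm hρ)
        apply hτ
        simp only [hB, Finset.mem_filter, Finset.mem_univ, true_and]
        intro j hj hτj
        have hσB := (Finset.mem_filter.mp hσ.1).2
        exact hσB j hj (hcause j (hS j hj).1 (hS j hj).2 σ τ hρpos hτj)
      calc μ σ = μ σ * ∑ τ, ρ i σ τ := by rw [h1, mul_one]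
        _ = ∑ τ, μ σ * ρ i σ τ := Finset.mul_sum _ _ _
        _ = ∑ τ ∈ B, μ σ * ρ i σ τ :=
            (Finset.sum_subset (Finset.subset_univ B)
              (fun τ _ hτ => by rw [h2 τ hτ, mul_zero])).symm
    calc ∑ σ ∈ B ∩ f i, μ σ
        = ∑ σ ∈ B ∩ f i, ∑ τ ∈ B, μ σ * ρ i σ τ := Finset.sum_congr rfl key
      _ = ∑ τ ∈ B, ∑ σ ∈ B ∩ f i, μ σ * ρ i σ τ := Finset.sum_comm
      _ ≤ ∑ τ ∈ B, ∑ σ ∈ f i, μ σ * ρ i σ τ := by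
          refine Finset.sum_le_sum fun τ _ => ?_
          refine Finset.sum_le_sum_of_subset_of_nonneg Finset.inter_subset_right ?_
          intro σ _ _
          exact mul_nonneg (hμpos σ).le (hρnonneg _ _ _)
      _ ≤ ∑ τ ∈ B, γ * μ τ := by
          refine Finset.sum_le_sum fun τ _ => ?_
          have hμτ : 0 < μ τ := hμpos τ
          calc ∑ σ ∈ f i, μ σ * ρ i σ τ
              = (∑ σ ∈ f i, μ σ / μ τ * ρ i σ τ) * μ τ := by
                rw [Finset.sum_mul]
                refine Finset.sum_congr rfl fun σ _ => ?_
                field_simp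
            _ ≤ γ * μ τ := mul_le_mul_of_nonneg_right (hγ τ) hμτ.le
      _ = γ * ∑ σ ∈ B, μ σ := by rw [Finset.mul_sum]
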